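/- Fix κ ≥ 1, a nonzero n ∈ ℕ^κ, and a function b : ℕ^κ∖{0} → ℝ. For a nonzero vector v ∈ ℕ^κ and a symmetric matrix M belonging to the image { A(r) : r ∈ P(v) }, define λ_b(v, M) := min { Σ_m r(m)·b(m) : r ∈ P(v), A(r) = M } (a minimum over a finite nonempty set). Then for every M ∈ { A(r) : r ∈ P(n) } with M ≠ n⊗n, the set of decompositions D(M) := { (m, m', M₁, M₂) : m + m' = n, m ≠ 0, m' ≠ 0, M₁ ∈ { A(r₁) : r₁ ∈ P(m) }, M₂ ∈ { A(r₂) : r₂ ∈ P(m') }, M₁ + M₂ = M } is nonempty, and λ_b(n, M) = min { λ_b(m, M₁) + λ_b(m', M₂) : (m, m', M₁, M₂) ∈ D(M) }. -/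

import Mathlib

/-- A vector partition of a nonzero `n ∈ ℕ^κ`: a finitely supported function
`r : ℕ^κ → ℕ` with `r 0 = 0` and `Σ_m r(m)·m = n` (componentwise). -/
def IsVPartition {κ : ℕ} (n : Fin κ → ℕ) (r : (Fin κ → ℕ) →₀ ℕ) : Prop :=
  r 0 = 0 ∧ r.sum (fun m k => k • m) = n

/-- The `A`-matrix of a vector partition: `A(r)_{αβ} = Σ_m r(m)·m_α·m_β`. -/
def AMat {κ : ℕ} (r : (Fin κ → ℕ) →₀ ℕ) : Matrix (Fin κ) (Fin κ) ℕ :=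
  Matrix.of fun α β => r.sum fun m k => k * (m α * m β)

/-- The set of `b`-weights of vector partitions of `v` with `A`-matrix `M`. -/
def lamSet {κ : ℕ} (b : (Fin κ → ℕ) → ℝ) (v : Fin κ → ℕ)
    (M : Matrix (Fin κ) (Fin κ) ℕ) : Set ℝ :=
  {x | ∃ r, IsVPartition v r ∧ AMat r = M ∧ x = r.sum fun m k => (k : ℝ) * b m}

/-- `λ_b(v, M)`: the minimum of `Σ_m r(m)·b(m)` over the vector partitions `r` of `v`
with `A(r) = M` (a minimum of a finite nonempty set, realized as an infimum). -/
noncomputable def lamB {κ : ℕ} (b : (Fin κ → ℕ) → ℝ) (v : Fin κ → ℕ)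
    (M : Matrix (Fin κ) (Fin κ) ℕ) : ℝ :=
  sInf (lamSet b v M)

lemma vp_apply {κ : ℕ} (r : (Fin κ → ℕ) →₀ ℕ) (α : Fin κ) :
    (r.sum fun m k => k • m) α = r.sum fun m k => k * m α := by
  rw [Finsupp.sum, Finsupp.sum, Finset.sum_apply]; rfl

lemma vp_term_le {κ : ℕ} {n : Fin κ → ℕ} {r : (Fin κ → ℕ) →₀ ℕ}
    (h : IsVPartition n r) {m : Fin κ → ℕ} (hm : m ∈ r.support) (α : Fin κ) :
    r m * m α ≤ n α := by
  have : r m * m α ≤ r.sum fun m k => k * m α :=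
    Finset.single_le_sum (f := fun m => r m * m α) (fun _ _ => Nat.zero_le _) hm
  rwa [← vp_apply, h.2] at this

lemma vp_finite {κ : ℕ} (n : Fin κ → ℕ) :
    {r : (Fin κ → ℕ) →₀ ℕ | IsVPartition n r}.Finite := by
  classical
  set N : ℕ := ∑ α, n α with hN
  set S : Finset (Fin κ → ℕ) := Fintype.piFinset fun α => Finset.range (n α + 1) with hS
  set g : (Fin κ → ℕ) →₀ ℕ := Finsupp.indicator S (fun _ _ => N) with hg
  refine (Set.finite_Iic g).subset ?_
  intro r hr
  simp only [Set.mem_Iic]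
  intro m
  rcases Nat.eq_zero_or_pos (r m) with h0 | hpos
  · simp [h0]
  have hmem : m ∈ r.support := Finsupp.mem_support_iff.mpr hpos.ne'
  have hm0 : m ≠ 0 := by
    rintro rfl; exact hpos.ne' hr.1
  obtain ⟨α, hα⟩ : ∃ α, 0 < m α := by
    by_contra h; push_neg at h
    exact hm0 (funext fun α => Nat.le_zero.mp (h α))
  have hmS : m ∈ S := by
    rw [hS, Fintype.mem_piFinset]
    intro β
    rw [Finset.mem_range, Nat.lt_succ_iff]
    calc m β ≤ r m * m β := Nat.le_mul_of_pos_left _ hpos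
    _ ≤ n β := vp_term_le hr hmem β
  have : r m ≤ N := by
    calc r m ≤ r m * m α := Nat.le_mul_of_pos_right _ hα
    _ ≤ n α := vp_term_le hr hmem α
    _ ≤ N := Finset.single_le_sum (f := n) (fun _ _ => Nat.zero_le _) (Finset.mem_univ α)
  rw [hg, Finsupp.indicator_apply, dif_pos hmS]
  exact this

lemma vp_add {κ : ℕ} {m m' : Fin κ → ℕ} {r₁ r₂ : (Fin κ → ℕ) →₀ ℕ}
    (h₁ : IsVPartition m r₁) (h₂ : IsVPartition m' r₂) :
    IsVPartition (m + m') (r₁ + r₂) := by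
  constructor
  · simp [Finsupp.add_apply, h₁.1, h₂.1]
  · rw [Finsupp.sum_add_index' (h := fun m k => k • m) (fun _ => zero_smul _ _)
      (fun _ k l => add_smul k l _), h₁.2, h₂.2]

lemma amat_add {κ : ℕ} (r₁ r₂ : (Fin κ → ℕ) →₀ ℕ) :
    AMat (r₁ + r₂) = AMat r₁ + AMat r₂ := by
  ext α β
  simp only [AMat, Matrix.of_apply, Matrix.add_apply]
  exact Finsupp.sum_add_index' (fun _ => zero_mul _) (fun _ k l => add_mul k l _)

lemma wt_add {κ : ℕ} (b : (Fin κ → ℕ) → ℝ) (r₁ r₂ : (Fin κ → ℕ) →₀ ℕ) :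
    ((r₁ + r₂).sum fun m k => (k : ℝ) * b m)
      = (r₁.sum fun m k => (k : ℝ) * b m) + (r₂.sum fun m k => (k : ℝ) * b m) := by
  exact Finsupp.sum_add_index' (fun _ => by simp) (fun _ k l => by push_cast; ring)

lemma amat_single {κ : ℕ} (m : Fin κ → ℕ) :
    AMat (Finsupp.single m 1) = Matrix.of fun α β => m α * m β := by
  ext α β
  simp [AMat, Finsupp.sum_single_index]

lemma lamSet_finite {κ : ℕ} (b : (Fin κ → ℕ) → ℝ) (v : Fin κ → ℕ)
    (M : Matrix (Fin κ) (Fin κ) ℕ) : (lamSet b v M).Finite := by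
  refine ((vp_finite v).image fun r => r.sum fun m k => (k : ℝ) * b m).subset ?_
  rintro x ⟨r, hr, -, rfl⟩
  exact ⟨r, hr, rfl⟩

lemma lamB_le {κ : ℕ} (b : (Fin κ → ℕ) → ℝ) (v : Fin κ → ℕ)
    (M : Matrix (Fin κ) (Fin κ) ℕ) {x : ℝ} (hx : x ∈ lamSet b v M) :
    lamB b v M ≤ x :=
  csInf_le (lamSet_finite b v M).bddBelow hx

lemma lamB_mem {κ : ℕ} (b : (Fin κ → ℕ) → ℝ) (v : Fin κ → ℕ)
    (M : Matrix (Fin κ) (Fin κ) ℕ) (hne : (lamSet b v M).Nonempty) :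
    lamB b v M ∈ lamSet b v M :=
  hne.csInf_mem (lamSet_finite b v M)

lemma vp_split {κ : ℕ} {n : Fin κ → ℕ} (hn : n ≠ 0) {r : (Fin κ → ℕ) →₀ ℕ}
    (hr : IsVPartition n r)
    (hne : AMat r ≠ Matrix.of fun α β => n α * n β) :
    ∃ (m m' : Fin κ → ℕ) (r₂ : (Fin κ → ℕ) →₀ ℕ),
      m + m' = n ∧ m ≠ 0 ∧ m' ≠ 0 ∧ IsVPartition m (Finsupp.single m 1) ∧
      IsVPartition m' r₂ ∧ Finsupp.single m 1 + r₂ = r := by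
  classical
  have hr0 : r ≠ 0 := by
    rintro rfl
    apply hn
    rw [← hr.2, Finsupp.sum_zero_index]
  obtain ⟨m, hm⟩ := Finsupp.support_nonempty_iff.mpr hr0
  have hm0 : m ≠ 0 := by
    rintro rfl
    exact Finsupp.mem_support_iff.mp hm hr.1
  have hle : Finsupp.single m 1 ≤ r := by
    rw [Finsupp.single_le_iff]
    exact Nat.one_le_iff_ne_zero.mpr (Finsupp.mem_support_iff.mp hm)
  set r₂ : (Fin κ → ℕ) →₀ ℕ := r - Finsupp.single m 1 with hr₂
  have hsum : Finsupp.single m 1 + r₂ = r := add_tsub_cancel_of_le hle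
  have h₁ : IsVPartition m (Finsupp.single m 1) := by
    constructor
    · exact Finsupp.single_eq_of_ne' hm0
    · rw [Finsupp.sum_single_index (zero_smul ℕ m), one_smul]
  set m' : Fin κ → ℕ := r₂.sum fun m k => k • m with hm'
  have h₂ : IsVPartition m' r₂ := by
    constructor
    · simp [hr₂, Finsupp.tsub_apply, hr.1]
    · rfl
  have hmm : m + m' = n := by
    have := vp_add h₁ h₂
    rw [hsum] at this
    rw [← this.2, hr.2]
  have hr₂0 : r₂ ≠ 0 := by
    rintro h
    rw [h, add_zero] at hsum
    have hmn : m = n := by rw [← hr.2, ← hsum, Finsupp.sum_single_index (zero_smul ℕ m), one_smul]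
    apply hne
    rw [← hsum, amat_single, hmn]
  have hm'0 : m' ≠ 0 := by
    obtain ⟨m'', hm''⟩ := Finsupp.support_nonempty_iff.mpr hr₂0
    have hm''0 : m'' ≠ 0 := by
      rintro rfl
      exact Finsupp.mem_support_iff.mp hm'' h₂.1
    obtain ⟨α, hα⟩ : ∃ α, 0 < m'' α := by
      by_contra h; push_neg at h
      exact hm''0 (funext fun α => Nat.le_zero.mp (h α))
    intro h0
    have : 0 < m' α := by
      have h1 : r₂ m'' * m'' α ≤ m' α := by
        rw [hm', vp_apply]
        exact Finset.single_le_sum (f := fun m => r₂ m * m α) (fun _ _ => Nat.zero_le _) hm''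
      have h2 : 0 < r₂ m'' * m'' α :=
        Nat.mul_pos (Nat.pos_of_ne_zero (Finsupp.mem_support_iff.mp hm'')) hα
      exact lt_of_lt_of_le h2 h1
    rw [h0] at this
    exact absurd this (lt_irrefl 0)
  exact ⟨m, m', r₂, hmm, hm0, hm'0, h₁, h₂, hsum⟩

/-- Recursion for the class exponents `λ_b`: for `M` an `A`-matrix of a partition of `n`
with `M ≠ n⊗n`, the defining set of `λ_b(n, M)` is finite and nonempty, the set of
decompositions `D(M)` is nonempty, and `λ_b(n, M)` is the minimum of
`λ_b(m, M₁) + λ_b(m', M₂)` over `D(M)`. -/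
theorem lamB_recursion {κ : ℕ} (hκ : 1 ≤ κ) (b : (Fin κ → ℕ) → ℝ)
    (n : Fin κ → ℕ) (hn : n ≠ 0) (M : Matrix (Fin κ) (Fin κ) ℕ)
    (hM : ∃ r, IsVPartition n r ∧ AMat r = M)
    (hMne : M ≠ Matrix.of fun α β => n α * n β) :
    (lamSet b n M).Finite ∧ (lamSet b n M).Nonempty ∧
    (∃ m m' M₁ M₂ : _, m + m' = n ∧ m ≠ 0 ∧ m' ≠ 0 ∧
        (∃ r₁, IsVPartition m r₁ ∧ AMat r₁ = M₁) ∧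
        (∃ r₂, IsVPartition m' r₂ ∧ AMat r₂ = M₂) ∧ M₁ + M₂ = M) ∧
    lamB b n M
      = sInf {x | ∃ (m m' : Fin κ → ℕ) (M₁ M₂ : Matrix (Fin κ) (Fin κ) ℕ),
          m + m' = n ∧ m ≠ 0 ∧ m' ≠ 0 ∧
          (∃ r₁, IsVPartition m r₁ ∧ AMat r₁ = M₁) ∧
          (∃ r₂, IsVPartition m' r₂ ∧ AMat r₂ = M₂) ∧ M₁ + M₂ = M ∧
          x = lamB b m M₁ + lamB b m' M₂} := by
  classical
  obtain ⟨r₀', hr₀', hA₀'⟩ := hM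
  have hSne : (lamSet b n M).Nonempty := ⟨_, r₀', hr₀', hA₀', rfl⟩
  set D : Set ℝ := {x | ∃ (m m' : Fin κ → ℕ) (M₁ M₂ : Matrix (Fin κ) (Fin κ) ℕ),
          m + m' = n ∧ m ≠ 0 ∧ m' ≠ 0 ∧
          (∃ r₁, IsVPartition m r₁ ∧ AMat r₁ = M₁) ∧
          (∃ r₂, IsVPartition m' r₂ ∧ AMat r₂ = M₂) ∧ M₁ + M₂ = M ∧
          x = lamB b m M₁ + lamB b m' M₂} with hD
  -- every element of D is ≥ lamB b n M
  have key1 : ∀ x ∈ D, lamB b n M ≤ x := by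
    rintro x ⟨m, m', M₁, M₂, hmm, hm0, hm'0, ⟨r₁, h₁, hA₁⟩, ⟨r₂, h₂, hA₂⟩, hMsum, rfl⟩
    have hne₁ : (lamSet b m M₁).Nonempty := ⟨_, r₁, h₁, hA₁, rfl⟩
    have hne₂ : (lamSet b m' M₂).Nonempty := ⟨_, r₂, h₂, hA₂, rfl⟩
    obtain ⟨s₁, hs₁, hAs₁, hws₁⟩ := lamB_mem b m M₁ hne₁
    obtain ⟨s₂, hs₂, hAs₂, hws₂⟩ := lamB_mem b m' M₂ hne₂
    have hmem : lamB b m M₁ + lamB b m' M₂ ∈ lamSet b n M := by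
      refine ⟨s₁ + s₂, ?_, ?_, ?_⟩
      · rw [← hmm]; exact vp_add hs₁ hs₂
      · rw [amat_add, hAs₁, hAs₂, hMsum]
      · rw [wt_add, hws₁, hws₂]
    exact lamB_le b n M hmem
  -- minimizer of lamSet b n M and its splitting
  obtain ⟨r₀, hr₀, hA₀, hw₀⟩ := lamB_mem b n M hSne
  have hA₀ne : AMat r₀ ≠ Matrix.of fun α β => n α * n β := hA₀ ▸ hMne
  obtain ⟨m, m', r₂, hmm, hm0, hm'0, h₁, h₂, hsum⟩ := vp_split hn hr₀ hA₀ne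
  have hMsum : AMat (Finsupp.single m 1) + AMat r₂ = M := by
    rw [← amat_add, hsum, hA₀]
  have hx₀D : lamB b m (AMat (Finsupp.single m 1)) + lamB b m' (AMat r₂) ∈ D := by
    exact ⟨m, m', _, _, hmm, hm0, hm'0, ⟨_, h₁, rfl⟩, ⟨_, h₂, rfl⟩, hMsum, rfl⟩
  have hx₀le : lamB b m (AMat (Finsupp.single m 1)) + lamB b m' (AMat r₂) ≤ lamB b n M := by
    have l1 : lamB b m (AMat (Finsupp.single m 1))
        ≤ (Finsupp.single m (1 : ℕ)).sum fun m (k : ℕ) => (k : ℝ) * b m :=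
      lamB_le _ _ _ ⟨_, h₁, rfl, rfl⟩
    have l2 : lamB b m' (AMat r₂) ≤ r₂.sum fun m k => (k : ℝ) * b m :=
      lamB_le _ _ _ ⟨_, h₂, rfl, rfl⟩
    calc lamB b m (AMat (Finsupp.single m 1)) + lamB b m' (AMat r₂)
        ≤ ((Finsupp.single m (1 : ℕ)).sum fun m (k : ℕ) => (k : ℝ) * b m)
          + r₂.sum fun m (k : ℕ) => (k : ℝ) * b m := add_le_add l1 l2
      _ = r₀.sum fun m k => (k : ℝ) * b m := by rw [← wt_add, hsum]
      _ = lamB b n M := hw₀.symm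
  refine ⟨lamSet_finite b n M, hSne, ?_, ?_⟩
  · obtain ⟨mm, mm', M₁, M₂, h⟩ := hx₀D
    exact ⟨mm, mm', M₁, M₂, h.1, h.2.1, h.2.2.1, h.2.2.2.1, h.2.2.2.2.1, h.2.2.2.2.2.1⟩
  · apply le_antisymm
    · exact le_trans (le_csInf ⟨_, hx₀D⟩ key1) le_rfl
    · exact le_trans (csInf_le ⟨lamB b n M, key1⟩ hx₀D) hx₀le
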